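/- Let A and B be linear subspaces of ℝ^n. Then (A ∩ B) + (A^⊥ ∩ B^⊥) = (A + (A^⊥ ∩ B^⊥)) ∩ (B + (A^⊥ ∩ B^⊥)). In particular, the fixed point set of the Douglas–Rachford operator T_DR = ½(R_A R_B + Id), which equals (A ∩ B) + (A^⊥ ∩ B^⊥), coincides with the intersection Ã ∩ B̃ of the enlargements Ã = A + (A^⊥ ∩ B^⊥) and B̃ = B + (A^⊥ ∩ B^⊥). -/

import Mathlib

/-- The reflection across a subspace `K` of Euclidean space, `R_K = 2 P_K - Id`. -/
noncomputable def reflS {n : ℕ} (K : Submodule ℝ (EuclideanSpace ℝ (Fin n)))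
    (x : EuclideanSpace ℝ (Fin n)) : EuclideanSpace ℝ (Fin n) :=
  (2:ℝ) • (K.orthogonalProjectionOnto x : EuclideanSpace ℝ (Fin n)) - x

/-- For linear subspaces `A, B` of ℝⁿ:
`(A ∩ B) + (A^⊥ ∩ B^⊥) = (A + (A^⊥ ∩ B^⊥)) ∩ (B + (A^⊥ ∩ B^⊥))`, and the fixed point set
of the Douglas–Rachford operator `T = ½(R_A R_B + Id)` equals `(A ∩ B) + (A^⊥ ∩ B^⊥)`,
hence coincides with the intersection `Ã ∩ B̃` of the enlargements. -/
theorem stmt17 {n : ℕ} (A B : Submodule ℝ (EuclideanSpace ℝ (Fin n))) :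
    ((A ⊓ B) ⊔ (Aᗮ ⊓ Bᗮ) = (A ⊔ (Aᗮ ⊓ Bᗮ)) ⊓ (B ⊔ (Aᗮ ⊓ Bᗮ))) ∧
    {x : EuclideanSpace ℝ (Fin n) | (1/2 : ℝ) • (reflS A (reflS B x) + x) = x} =
      ((A ⊓ B) ⊔ (Aᗮ ⊓ Bᗮ) : Submodule ℝ (EuclideanSpace ℝ (Fin n))) := by
  constructor
  · -- Part 1
    apply le_antisymm
    · exact le_inf (sup_le_sup_right inf_le_left _) (sup_le_sup_right inf_le_right _)
    · rintro x ⟨hx1, hx2⟩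
      obtain ⟨a, ha, c1, hc1, hac⟩ := Submodule.mem_sup.mp hx1
      obtain ⟨b, hb, c2, hc2, hbc⟩ := Submodule.mem_sup.mp hx2
      have heq : a + c1 = b + c2 := by rw [hac, hbc]
      have hab : a - b = c2 - c1 := by
        rw [sub_eq_sub_iff_add_eq_add, heq, add_comm]
      have hcC : c2 - c1 ∈ Aᗮ ⊓ Bᗮ := sub_mem hc2 hc1
      have hinner : (inner ℝ (a - b) (a - b) : ℝ) = 0 := by
        nth_rewrite 2 [hab]
        rw [inner_sub_left]
        have h1 : (inner ℝ a (c2 - c1) : ℝ) = 0 :=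
          (Submodule.mem_orthogonal _ _).mp hcC.1 a ha
        have h2 : (inner ℝ b (c2 - c1) : ℝ) = 0 :=
          (Submodule.mem_orthogonal _ _).mp hcC.2 b hb
        rw [h1, h2, sub_zero]
      have hab0 : a = b := sub_eq_zero.mp (inner_self_eq_zero.mp hinner)
      exact Submodule.mem_sup.mpr ⟨a, ⟨ha, hab0 ▸ hb⟩, c1, hc1, hac⟩
  · -- Part 2
    ext x
    simp only [Set.mem_setOf_eq, SetLike.mem_coe]
    -- first, simplify the fixed point equation
    have hiff : (1/2 : ℝ) • (reflS A (reflS B x) + x) = x ↔ reflS A (reflS B x) = x := by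
      constructor
      · intro h
        have h2 := congrArg (fun z => (2:ℝ) • z) h
        simp only [smul_smul] at h2
        norm_num at h2
        have : reflS A (reflS B x) + x = x + x := by rw [h2, two_smul]
        exact add_right_cancel this
      · intro h
        rw [h, ← two_smul ℝ x, smul_smul]
        norm_num
    rw [hiff]
    set b : EuclideanSpace ℝ (Fin n) := (B.orthogonalProjectionOnto x : EuclideanSpace ℝ (Fin n))
      with hbdef
    have hyB : reflS B x = (2:ℝ) • b - x := rfl
    have hiff2 : reflS A (reflS B x) = x ↔
        ((A.orthogonalProjectionOnto (reflS B x) : EuclideanSpace ℝ (Fin n)) = b) := by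
      have hra : reflS A (reflS B x) =
          (2:ℝ) • (A.orthogonalProjectionOnto (reflS B x) : EuclideanSpace ℝ (Fin n))
            - reflS B x := rfl
      rw [hra, sub_eq_iff_eq_add]
      have hxy : x + reflS B x = (2:ℝ) • b := by rw [hyB]; abel
      rw [hxy]
      constructor
      · intro h
        exact smul_right_injective (EuclideanSpace ℝ (Fin n)) (by norm_num : (2:ℝ) ≠ 0) h
      · intro h; rw [h]
    rw [hiff2]
    constructor
    · intro h
      set q : EuclideanSpace ℝ (Fin n) := x - b with hqdef
      have hqB : q ∈ Bᗮ := Submodule.sub_starProjection_mem_orthogonal x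
      have hy : reflS B x = b - q := by rw [hyB, hqdef]; module
      have hsplit : (A.orthogonalProjectionOnto (reflS B x) : EuclideanSpace ℝ (Fin n))
          = (A.orthogonalProjectionOnto b : EuclideanSpace ℝ (Fin n))
            - (A.orthogonalProjectionOnto q : EuclideanSpace ℝ (Fin n)) := by
        rw [hy, map_sub, Submodule.coe_sub]
      rw [hsplit] at h
      -- v := b - P_A b = - P_A q  lies in A ∩ Aᗮ, hence is 0
      have key : ∀ (u v w : EuclideanSpace ℝ (Fin n)), u - v = w → w - u = -v := by
        intro u v w h'; rw [← h']; module
      have hv : b - (A.orthogonalProjectionOnto b : EuclideanSpace ℝ (Fin n))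
          = - (A.orthogonalProjectionOnto q : EuclideanSpace ℝ (Fin n)) := key _ _ _ h
      have hvA : b - (A.orthogonalProjectionOnto b : EuclideanSpace ℝ (Fin n)) ∈ A := by
        rw [hv]; exact neg_mem (SetLike.coe_mem _)
      have hvAp : b - (A.orthogonalProjectionOnto b : EuclideanSpace ℝ (Fin n)) ∈ Aᗮ :=
        Submodule.sub_starProjection_mem_orthogonal b
      have hv0 : b - (A.orthogonalProjectionOnto b : EuclideanSpace ℝ (Fin n)) = 0 := by
        have := (Submodule.mem_orthogonal _ _).mp hvAp _ hvA
        exact inner_self_eq_zero.mp this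
      have hbA : b ∈ A := by
        have : (A.orthogonalProjectionOnto b : EuclideanSpace ℝ (Fin n)) = b := by
          have := sub_eq_zero.mp hv0; exact this.symm
        exact Submodule.starProjection_eq_self_iff (K := A).mp this
      have hPq0 : (A.orthogonalProjectionOnto q : EuclideanSpace ℝ (Fin n)) = 0 := by
        have := hv.symm.trans hv0
        simpa [neg_eq_zero] using this
      have hqA : q ∈ Aᗮ := by
        have : q - (A.orthogonalProjectionOnto q : EuclideanSpace ℝ (Fin n)) ∈ Aᗮ :=
          Submodule.sub_starProjection_mem_orthogonal (K := A) q
        rwa [hPq0, sub_zero] at this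
      refine Submodule.mem_sup.mpr ⟨b, ⟨hbA, SetLike.coe_mem _⟩, q, ⟨hqA, hqB⟩, ?_⟩
      rw [hqdef]; abel
    · intro hx
      obtain ⟨w, hw, c, hc, hwc⟩ := Submodule.mem_sup.mp hx
      have hPBx : b = w := by
        rw [hbdef, ← hwc, map_add, Submodule.coe_add,
          (show ((B.orthogonalProjectionOnto w : EuclideanSpace ℝ (Fin n)) = w) from
            Submodule.starProjection_eq_self_iff (K := B).mpr hw.2),
          Submodule.orthogonalProjectionOnto_apply_of_mem_orthogonal hc.2,
          ZeroMemClass.coe_zero, add_zero]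
      have hy : reflS B x = w - c := by
        rw [hyB, hPBx, ← hwc]; module
      rw [hy, map_sub, Submodule.coe_sub,
        (show ((A.orthogonalProjectionOnto w : EuclideanSpace ℝ (Fin n)) = w) from
          Submodule.starProjection_eq_self_iff (K := A).mpr hw.1),
        Submodule.orthogonalProjectionOnto_apply_of_mem_orthogonal hc.1,
        ZeroMemClass.coe_zero, sub_zero, hPBx]
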